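/- Conditional Bayes density-ratio identity: Let (X, A) be a pair of random variables where A is discrete taking values a and a'. If P(A = a' | X) > 0 a.s. and P(A = a) > 0 and P(A = a') > 0, then the Radon-Nikodym derivative of the conditional law of X given A = a with respect to the conditional law of X given A = a' equals [P(A = a | X) / P(A = a' | X)] · [P(A = a') / P(A = a)], P(· | A = a')-almost surely. -/

import Mathlib

open MeasureTheory ProbabilityTheory
open scoped ENNReal

lemma map_restrict_eq_withDensity
    {Ω 𝒳 : Type*} {F : MeasurableSpace Ω} [MeasurableSpace 𝒳]
    (P : Measure Ω) [IsProbabilityMeasure P]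
    (X : Ω → 𝒳) (hX : Measurable X) (s : Set Ω) (hs : MeasurableSet s)
    (p : 𝒳 → ℝ) (hp : Measurable p)
    (hver : (fun ω => p (X ω))
      =ᵐ[P] P[Set.indicator s (fun _ => (1:ℝ)) | MeasurableSpace.comap X inferInstance]) :
    Measure.map X (P.restrict s)
      = (Measure.map X P).withDensity (fun x => ENNReal.ofReal (p x)) := by
  have hm : MeasurableSpace.comap X inferInstance ≤ F := hX.comap_le
  haveI : SigmaFinite (P.trim hm) := (isFiniteMeasure_trim hm).toSigmaFinite
  have hind : Integrable (Set.indicator s (fun _ => (1:ℝ))) P :=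
    (integrable_const (1:ℝ)).indicator hs
  have hce : 0 ≤ᵐ[P] P[Set.indicator s (fun _ => (1:ℝ)) | MeasurableSpace.comap X inferInstance] :=
    condExp_nonneg (Filter.Eventually.of_forall fun ω =>
      Set.indicator_nonneg (fun _ _ => zero_le_one) ω)
  have hnn : 0 ≤ᵐ[P] fun ω => p (X ω) := by
    filter_upwards [hver, hce] with ω h1 h2; rw [h1]; exact h2
  have hint : Integrable (fun ω => p (X ω)) P := integrable_condExp.congr hver.symm
  ext T hT
  rw [Measure.map_apply hX hT, Measure.restrict_apply (hX hT),
    withDensity_apply _ hT, setLIntegral_map hT hp.ennreal_ofReal hX]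
  have h1 : ∫⁻ ω in X ⁻¹' T, ENNReal.ofReal (p (X ω)) ∂P
      = ENNReal.ofReal (∫ ω in X ⁻¹' T, p (X ω) ∂P) := by
    rw [ofReal_integral_eq_lintegral_ofReal hint.integrableOn (ae_restrict_of_ae hnn)]
  rw [h1]
  have hTm : MeasurableSet[MeasurableSpace.comap X inferInstance] (X ⁻¹' T) := ⟨T, hT, rfl⟩
  have h2 : ∫ ω in X ⁻¹' T, p (X ω) ∂P
      = ∫ ω in X ⁻¹' T, Set.indicator s (fun _ => (1:ℝ)) ω ∂P := by
    rw [integral_congr_ae (ae_restrict_of_ae hver)]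
    exact setIntegral_condExp hm hind hTm
  rw [h2, integral_indicator hs]
  simp only [integral_const, smul_eq_mul, mul_one]
  rw [measureReal_def, Measure.restrict_apply_univ, Measure.restrict_apply hs, Set.inter_comm,
    ENNReal.ofReal_toReal (measure_ne_top P _)]

theorem conditional_bayes_density_ratio
    {Ω 𝒳 α : Type*} {F : MeasurableSpace Ω} [MeasurableSpace 𝒳] [MeasurableSpace α]
    [MeasurableSingletonClass α]
    (P : Measure Ω) [IsProbabilityMeasure P]
    (X : Ω → 𝒳) (hX : Measurable X)
    (A : Ω → α) (hA : Measurable A)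
    (a a' : α) (hne : a ≠ a')
    (ha : 0 < P {ω | A ω = a}) (ha' : 0 < P {ω | A ω = a'})
    (pa pa' : 𝒳 → ℝ) (hpa : Measurable pa) (hpa' : Measurable pa')
    (hpa_ver : (fun ω => pa (X ω))
      =ᵐ[P] P[Set.indicator {ω | A ω = a} (fun _ => (1:ℝ)) | MeasurableSpace.comap X inferInstance])
    (hpa'_ver : (fun ω => pa' (X ω))
      =ᵐ[P] P[Set.indicator {ω | A ω = a'} (fun _ => (1:ℝ)) | MeasurableSpace.comap X inferInstance])
    (hpos : ∀ᵐ ω ∂P, 0 < pa' (X ω)) :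
    (Measure.map X (P[|{ω | A ω = a}])).rnDeriv (Measure.map X (P[|{ω | A ω = a'}]))
      =ᵐ[Measure.map X (P[|{ω | A ω = a'}])]
      fun x => ENNReal.ofReal
        (pa x / pa' x * ((P {ω | A ω = a'}).toReal / (P {ω | A ω = a}).toReal)) := by
  set s := {ω | A ω = a} with hs_def
  set s' := {ω | A ω = a'} with hs'_def
  have hs : MeasurableSet s := hA (measurableSet_singleton a)
  have hs' : MeasurableSet s' := hA (measurableSet_singleton a')
  set μ := Measure.map X P with hμ_def
  set g : 𝒳 → ℝ≥0∞ := fun x => ENNReal.ofReal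
      (pa x / pa' x * ((P s').toReal / (P s).toReal)) with hg_def
  have hg : Measurable g := ((hpa.div hpa').mul_const _).ennreal_ofReal
  -- densities of the conditional laws w.r.t. μ
  have hmap : ∀ (t : Set Ω), MeasurableSet t → 0 < P t → ∀ p : 𝒳 → ℝ, Measurable p →
      (fun ω => p (X ω)) =ᵐ[P] P[Set.indicator t (fun _ => (1:ℝ)) | MeasurableSpace.comap X inferInstance] →
      Measure.map X (P[|t]) = μ.withDensity (fun x => ENNReal.ofReal (p x / (P t).toReal)) := by
    intro t ht htpos p hp hver
    have hne' : (P t).toReal ≠ 0 := by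
      simp [ENNReal.toReal_ne_zero, htpos.ne', measure_ne_top P t]
    have htop : P t ≠ ⊤ := measure_ne_top P t
    rw [show P[|t] = (P t)⁻¹ • P.restrict t from rfl, Measure.map_smul, map_restrict_eq_withDensity P X hX t ht p hp hver,
      ← withDensity_smul' _ _ (ENNReal.inv_ne_top.2 htpos.ne')]
    congr 1
    ext x
    simp only [Pi.smul_apply, smul_eq_mul]
    rw [ENNReal.ofReal_div_of_pos (by positivity), div_eq_mul_inv,
      ENNReal.ofReal_toReal htop, mul_comm]
  have h_a := hmap s hs ha pa hpa hpa_ver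
  have h_a' := hmap s' hs' ha' pa' hpa' hpa'_ver
  -- a.e. facts on μ
  have hpos_μ : ∀ᵐ x ∂μ, 0 < pa' x := by
    rw [hμ_def, ae_map_iff hX.aemeasurable (measurableSet_lt measurable_const hpa')]
    exact hpos
  have hm : MeasurableSpace.comap X inferInstance ≤ F := hX.comap_le
  haveI : SigmaFinite (P.trim hm) := (isFiniteMeasure_trim hm).toSigmaFinite
  have hpa_nn : ∀ᵐ x ∂μ, 0 ≤ pa x := by
    rw [hμ_def, ae_map_iff hX.aemeasurable (measurableSet_le measurable_const hpa)]
    have hce : 0 ≤ᵐ[P] P[Set.indicator s (fun _ => (1:ℝ)) | MeasurableSpace.comap X inferInstance] :=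
      condExp_nonneg (Filter.Eventually.of_forall fun ω =>
        Set.indicator_nonneg (fun _ _ => zero_le_one) ω)
    filter_upwards [hpa_ver, hce] with ω h1 h2; rw [h1]; simpa using h2
  -- key: density identity
  have hkey : (fun x => ENNReal.ofReal (pa x / (P s).toReal))
      =ᵐ[μ] (fun x => ENNReal.ofReal (pa' x / (P s').toReal)) * g := by
    filter_upwards [hpos_μ, hpa_nn] with x h1 h2
    have hc : (P s).toReal ≠ 0 := by
      simp [ENNReal.toReal_ne_zero, ha.ne', measure_ne_top P s]
    have hc' : (P s').toReal ≠ 0 := by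
      simp [ENNReal.toReal_ne_zero, ha'.ne', measure_ne_top P s']
    have hc'pos : 0 ≤ (P s').toReal := ENNReal.toReal_nonneg
    simp only [Pi.mul_apply, hg_def]
    rw [← ENNReal.ofReal_mul (by positivity)]
    congr 1
    field_simp
  have heq : Measure.map X (P[|s]) = (Measure.map X (P[|s'])).withDensity g := by
    rw [h_a, h_a', withDensity_congr_ae hkey,
      withDensity_mul _ (hpa'.div_const _).ennreal_ofReal hg]
  haveI : IsProbabilityMeasure (P[|s']) := cond_isProbabilityMeasure ha'.ne'
  haveI : IsProbabilityMeasure (Measure.map X (P[|s'])) :=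
    Measure.isProbabilityMeasure_map hX.aemeasurable
  rw [heq]
  exact Measure.rnDeriv_withDensity _ hg
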